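/- Let y ≥ 0 and α > 0, and define ℓ(x) = -y·log(x) + x for x > 0 (with ℓ(0) = 0 if y = 0, and ℓ(x) = +∞ otherwise). Then for any real x₀, the minimizer of αℓ(x) + (1/2)(x - x₀)² over x equals (1/2)(x₀ - α + √((x₀ - α)² + 4αy)). -/
import Mathlib

private lemma poisson_aux (y α x₀ p x : ℝ) (hy : 0 ≤ y) (hα : 0 < α)
    (hp : 0 < p) (hx : 0 < x) (key : p * (p - x₀ + α) = α * y) :
    α * (-y * Real.log p + p) + (1 / 2) * (p - x₀) ^ 2 + (1 / 2) * (x - p) ^ 2 ≤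
      α * (-y * Real.log x + x) + (1 / 2) * (x - x₀) ^ 2 := by
  have hlog : Real.log x - Real.log p ≤ x / p - 1 := by
    rw [← Real.log_div hx.ne' hp.ne']
    exact Real.log_le_sub_one_of_pos (div_pos hx hp)
  have hlog' : p * (Real.log x - Real.log p) ≤ x - p := by
    have h2 : p * (x / p - 1) = x - p := by field_simp
    nlinarith [mul_le_mul_of_nonneg_left hlog hp.le]
  have h1 : 0 ≤ p - x₀ + α := by nlinarith [mul_nonneg hα.le hy]
  have hmul := mul_le_mul_of_nonneg_left hlog' h1
  have heq : α * y * (Real.log x - Real.log p)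
      = (p - x₀ + α) * (p * (Real.log x - Real.log p)) := by
    linear_combination (Real.log p - Real.log x) * key
  nlinarith [hmul, heq]

/-- Closed-form proximal operator of the single-pixel negative Poisson
log-likelihood `ℓ(x) = -y log x + x` (with `ℓ(0) = 0` when `y = 0`),
over its effective domain `D`. Note `Real.log 0 = 0` in Mathlib, so
`fun x => -y * Real.log x + x` evaluates to `0` at `x = 0`. -/
theorem poisson_prox_formula (y α x₀ : ℝ) (hy : 0 ≤ y) (hα : 0 < α) :
    let ℓ : ℝ → ℝ := fun x => -y * Real.log x + x
    let D : Set ℝ := {x : ℝ | 0 < x ∨ (y = 0 ∧ x = 0)}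
    let p : ℝ := (1 / 2) * (x₀ - α + Real.sqrt ((x₀ - α) ^ 2 + 4 * α * y))
    p ∈ D ∧ (∀ x ∈ D, α * ℓ p + (1 / 2) * (p - x₀) ^ 2 ≤ α * ℓ x + (1 / 2) * (x - x₀) ^ 2) ∧
      ∀ q ∈ D, (∀ x ∈ D, α * ℓ q + (1 / 2) * (q - x₀) ^ 2 ≤ α * ℓ x + (1 / 2) * (x - x₀) ^ 2) →
        q = p := by
  intro ℓ D p
  have hℓ : ∀ x, ℓ x = -y * Real.log x + x := fun _ => rfl
  have hD : ∀ x : ℝ, x ∈ D ↔ (0 < x ∨ (y = 0 ∧ x = 0)) := fun _ => Iff.rfl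
  set s : ℝ := Real.sqrt ((x₀ - α) ^ 2 + 4 * α * y) with hs
  have hpdef : p = (1 / 2) * (x₀ - α + s) := rfl
  have hrad : 0 ≤ (x₀ - α) ^ 2 + 4 * α * y := by nlinarith [sq_nonneg (x₀ - α), mul_nonneg hα.le hy]
  have hs0 : 0 ≤ s := Real.sqrt_nonneg _
  have hs2 : s ^ 2 = (x₀ - α) ^ 2 + 4 * α * y := Real.sq_sqrt hrad
  have hp0 : 0 ≤ p := by
    rw [hpdef]
    nlinarith [sq_nonneg (s + (x₀ - α))]
  have key : p * (p - x₀ + α) = α * y := by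
    rw [hpdef]; linear_combination hs2 / 4
  have h1 : 0 ≤ p - x₀ + α := by
    rw [hpdef]
    nlinarith [sq_nonneg (s - (x₀ - α))]
  rcases eq_or_lt_of_le hy with hy0 | hypos
  · -- y = 0
    have hy0 : y = 0 := hy0.symm
    have hmemp : p ∈ D := by
      rcases eq_or_lt_of_le hp0 with h | h
      · exact (hD p).mpr (Or.inr ⟨hy0, h.symm⟩)
      · exact (hD p).mpr (Or.inl h)
    have hnn : ∀ x ∈ D, 0 ≤ x := by
      intro x hx
      rcases (hD x).mp hx with h | h
      · exact h.le
      · exact h.2.ge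
    have hkey0 : p * (p - x₀ + α) = 0 := by rw [key, hy0]; ring
    have hmin : ∀ x ∈ D, α * ℓ p + (1 / 2) * (p - x₀) ^ 2 ≤ α * ℓ x + (1 / 2) * (x - x₀) ^ 2 := by
      intro x hx
      have hx0 := hnn x hx
      simp only [hℓ, hy0]
      nlinarith [mul_nonneg hx0 h1, sq_nonneg (x - p), hkey0]
    refine ⟨hmemp, hmin, ?_⟩
    intro q hq hqmin
    have hq0 := hnn q hq
    have h2 := hqmin p hmemp
    have h3 := hmin q hq
    simp only [hℓ, hy0] at h2 h3
    have hsq : (q - p) ^ 2 ≤ 0 := by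
      nlinarith [mul_nonneg hq0 h1, hkey0]
    have hz : (q - p) ^ 2 = 0 := le_antisymm hsq (sq_nonneg _)
    have : q - p = 0 := by
      exact pow_eq_zero_iff (two_ne_zero) |>.mp hz
    linarith
  · -- y > 0
    have hp : 0 < p := by
      rcases eq_or_lt_of_le hp0 with h | h
      · exfalso; nlinarith [key]
      · exact h
    have hmemp : p ∈ D := (hD p).mpr (Or.inl hp)
    have hpos : ∀ x ∈ D, 0 < x := by
      intro x hx
      rcases (hD x).mp hx with h | h
      · exact h
      · exact absurd h.1 (by linarith)
    have hmin : ∀ x ∈ D, α * ℓ p + (1 / 2) * (p - x₀) ^ 2 ≤ α * ℓ x + (1 / 2) * (x - x₀) ^ 2 := by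
      intro x hx
      have := poisson_aux y α x₀ p x hy hα hp (hpos x hx) key
      simp only [hℓ]
      linarith [sq_nonneg (x - p)]
    refine ⟨hmemp, hmin, ?_⟩
    intro q hq hqmin
    have hq := hpos q hq
    have h2 := hqmin p hmemp
    have h3 := poisson_aux y α x₀ p q hy hα hp hq key
    simp only [hℓ] at h2
    have hsq : (q - p) ^ 2 ≤ 0 := by linarith
    have hz : (q - p) ^ 2 = 0 := le_antisymm hsq (sq_nonneg _)
    have : q - p = 0 := by
      exact pow_eq_zero_iff (two_ne_zero) |>.mp hz
    linarith
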